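/- Let (X, ψ) be a weighted space and let 𝓑^ψ(X) denote the closure of the bounded continuous functions C_b(X) in B^ψ(X) with respect to ‖·‖_ψ. A function f : X → ℝ belongs to 𝓑^ψ(X) if and only if (i) the restriction f|_{K_R} is continuous for all R > 0, and (ii) lim_{R→∞} sup_{x ∈ X \ K_R} ψ(x)^{-1}|f(x)| = 0. -/

import Mathlib

/-- `f` is a bounded continuous function. -/
def MemCb {X : Type*} [TopologicalSpace X] (g : X → ℝ) : Prop :=
  Continuous g ∧ ∃ M : ℝ, ∀ x, |g x| ≤ M

/-- `f ∈ 𝓑^ψ(X)`: `f` lies in the `‖·‖_ψ`-closure of the bounded continuous functions. -/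
def MemBpsi {X : Type*} [TopologicalSpace X] (ψ : X → ℝ) (f : X → ℝ) : Prop :=
  ∀ ε > (0 : ℝ), ∃ g : X → ℝ, MemCb g ∧ ∀ x, (ψ x)⁻¹ * |f x - g x| ≤ ε

open Set

/-- The weight is bounded below by a positive constant. -/
lemma exists_pos_lb {X : Type*} [TopologicalSpace X] [T2Space X]
    (ψ : X → ℝ) (hpos : ∀ x, 0 < ψ x)
    (hcomp : ∀ R > (0 : ℝ), IsCompact {x : X | ψ x ≤ R}) :
    ∃ c > (0 : ℝ), ∀ x, c ≤ ψ x := by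
  by_contra hc
  push_neg at hc
  set t : ℕ → Set X := fun n => {x | ψ x ≤ 1 / (n + 1)} with ht
  have htpos : ∀ n : ℕ, (0 : ℝ) < 1 / (n + 1) := by
    intro n; positivity
  have hne : ∀ n, (t n).Nonempty := by
    intro n
    obtain ⟨x, hx⟩ := hc _ (htpos n)
    exact ⟨x, le_of_lt hx⟩
  have hcomp' : ∀ n, IsCompact (t n) := fun n => hcomp _ (htpos n)
  have hdec : ∀ n, t (n + 1) ⊆ t n := by
    intro n x hx
    simp only [ht, Set.mem_setOf_eq] at hx ⊢
    have h5 : (1:ℝ) / ((n:ℝ) + 1 + 1) ≤ 1 / ((n:ℝ) + 1) := by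
      apply one_div_le_one_div_of_le (by positivity)
      linarith
    push_cast at hx
    linarith
  obtain ⟨x, hx⟩ := IsCompact.nonempty_iInter_of_sequence_nonempty_isCompact_isClosed t
    hdec hne (hcomp' 0) (fun n => (hcomp' n).isClosed)
  obtain ⟨n, hn⟩ := exists_nat_one_div_lt (hpos x)
  exact absurd (Set.mem_iInter.mp hx n) (not_le.mpr hn)

/-- Approximation of a function continuous on a compact set by a globally continuous
bounded function, in a completely regular T2 space (via Stone–Weierstrass). -/
lemma exists_cb_approx_on_compact {X : Type*} [TopologicalSpace X] [T2Space X]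
    [CompletelyRegularSpace X] {K : Set X} (hK : IsCompact K) {f : X → ℝ}
    (hf : ContinuousOn f K) {M δ : ℝ} (hM0 : 0 ≤ M) (hM : ∀ x ∈ K, |f x| ≤ M) (hδ : 0 < δ) :
    ∃ g : X → ℝ, Continuous g ∧ (∀ x, |g x| ≤ M + δ) ∧ ∀ x ∈ K, |f x - g x| ≤ δ := by
  haveI : CompactSpace K := isCompact_iff_compactSpace.mp hK
  set ι : C(K, X) := ⟨Subtype.val, continuous_subtype_val⟩ with hι
  set A : Subalgebra ℝ C(K, ℝ) := (ContinuousMap.compRightAlgHom ℝ ℝ ι).range with hA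
  have hsep : A.SeparatesPoints := by
    rintro x y hxy
    have hxy' : (x : X) ∉ ({(y : X)} : Set X) := by
      simpa using Subtype.coe_injective.ne hxy
    obtain ⟨u, hu, hux, huy⟩ := CompletelyRegularSpace.completely_regular (x : X)
      {(y : X)} isClosed_singleton hxy'
    refine ⟨_, ⟨(ContinuousMap.compRightAlgHom ℝ ℝ ι)
      ⟨fun z => ((u z : ℝ)), by continuity⟩, ⟨_, rfl⟩, rfl⟩, ?_⟩
    have h1 : (u (x : X) : ℝ) = 0 := by rw [hux]; rfl
    have h2 : (u (y : X) : ℝ) = 1 := by rw [huy rfl]; rfl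
    simp only [ContinuousMap.compRightAlgHom_apply, ContinuousMap.comp_apply,
      ContinuousMap.coe_mk]
    rw [hι]
    simp only [ContinuousMap.coe_mk]
    rw [h1, h2]
    norm_num
  have htop := ContinuousMap.subalgebra_topologicalClosure_eq_top_of_separatesPoints A hsep
  set F : C(K, ℝ) := ⟨K.restrict f, hf.restrict⟩ with hF
  have hFmem : F ∈ closure (A : Set C(K, ℝ)) := by
    rw [← Subalgebra.topologicalClosure_coe, htop]
    simp
  obtain ⟨h₀, h₀A, hdist⟩ := Metric.mem_closure_iff.mp hFmem δ hδ
  obtain ⟨h, rfl⟩ := h₀A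
  have hclose : ∀ x (hx : x ∈ K), |f x - h x| < δ := by
    intro x hx
    have := ContinuousMap.dist_apply_le_dist (f := F)
      (g := (ContinuousMap.compRightAlgHom ℝ ℝ ι) h) (⟨x, hx⟩ : K)
    have h2 : dist (f x) (h x) < δ := lt_of_le_of_lt this hdist
    rwa [Real.dist_eq] at h2
  refine ⟨fun z => max (-(M + δ)) (min (M + δ) (h z)), ?_, ?_, ?_⟩
  · exact continuous_const.max (continuous_const.min h.continuous)
  · intro x
    rw [abs_le]
    constructor
    · exact le_max_left _ _
    · exact max_le (by linarith) (min_le_left _ _)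
  · intro x hx
    have h1 : |f x - h x| < δ := hclose x hx
    have h2 : |h x| ≤ M + δ := by
      have := abs_sub_abs_le_abs_sub (h x) (f x)
      have h3 : |h x - f x| = |f x - h x| := abs_sub_comm _ _
      have := hM x hx
      linarith [abs_sub_abs_le_abs_sub (h x) (f x), h3 ▸ h1]
    have hhx : max (-(M + δ)) (min (M + δ) (h x)) = h x := by
      rw [min_eq_right (by linarith [abs_le.mp h2])]
      exact max_eq_right (by linarith [abs_le.mp h2])
    have hbx : (fun z => max (-(M + δ)) (min (M + δ) (h z))) x = h x := hhx
    rw [hbx]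
    exact le_of_lt h1

/-- `f ∈ 𝓑^ψ(X)` iff `f` restricted to each sublevel set `K_R` is continuous
and `sup_{x ∉ K_R} ψ(x)⁻¹ |f x| → 0` as `R → ∞`. -/
theorem memBpsi_iff_continuousOn_and_decay
    {X : Type*} [TopologicalSpace X] [T2Space X] [CompletelyRegularSpace X]
    (ψ : X → ℝ) (hpos : ∀ x, 0 < ψ x)
    (hcomp : ∀ R > (0 : ℝ), IsCompact {x : X | ψ x ≤ R})
    (f : X → ℝ) :
    MemBpsi ψ f ↔
      (∀ R > (0 : ℝ), ContinuousOn f {x : X | ψ x ≤ R}) ∧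
      (∀ ε > (0 : ℝ), ∃ R : ℝ, ∀ x, R < ψ x → (ψ x)⁻¹ * |f x| ≤ ε) := by
  constructor
  · intro h
    constructor
    · intro R hR
      have hmem : ∀ n : ℕ, ∃ g : X → ℝ, MemCb g ∧
          ∀ x, (ψ x)⁻¹ * |f x - g x| ≤ 1 / (n + 1) := fun n => h _ (by positivity)
      choose g hg hgb using hmem
      have hunif : TendstoUniformlyOn (fun n x => g n x) f Filter.atTop {x : X | ψ x ≤ R} := by
        rw [Metric.tendstoUniformlyOn_iff]
        intro ε hε
        obtain ⟨N, hN⟩ := exists_nat_one_div_lt (div_pos hε hR)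
        filter_upwards [Filter.eventually_ge_atTop N] with n hn x hx
        have hψ := hpos x
        have hb := hgb n x
        rw [inv_mul_le_iff₀ hψ] at hb
        have h1 : ψ x * (1 / (n + 1)) ≤ R * (1 / (n + 1)) := by
          have : (0:ℝ) < 1 / (n + 1) := by positivity
          have hxR : ψ x ≤ R := hx
          nlinarith
        have h2 : R * (1 / ((n:ℝ) + 1)) ≤ R * (1 / (N + 1)) := by
          have h3 : (1:ℝ) / ((n:ℝ) + 1) ≤ 1 / ((N:ℝ) + 1) := by
            apply one_div_le_one_div_of_le (by positivity)
            push_cast; exact_mod_cast by exact_mod_cast add_le_add_left (Nat.cast_le.mpr hn) 1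
          nlinarith
        have h4 : R * (1 / ((N:ℝ) + 1)) < ε := by
          rw [lt_div_iff₀ hR] at hN
          nlinarith
        rw [Real.dist_eq]
        calc |f x - g n x| ≤ ψ x * (1 / (n + 1)) := hb
          _ ≤ R * (1 / (n + 1)) := h1
          _ ≤ R * (1 / (N + 1)) := h2
          _ < ε := h4
      exact hunif.continuousOn (Filter.Eventually.of_forall fun n => (hg n).1.continuousOn).frequently
    · intro ε hε
      obtain ⟨g, ⟨hgc, M, hM⟩, hgb⟩ := h (ε / 2) (by positivity)
      refine ⟨2 * M / ε + 1, fun x hx => ?_⟩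
      have hψ := hpos x
      have hM0 : 0 ≤ M := le_trans (abs_nonneg _) (hM x)
      have h1 : 2 * M / ε < ψ x := by linarith
      have h2 : 2 * M < ψ x * ε := by rwa [div_lt_iff₀ hε] at h1
      have h3 : (ψ x)⁻¹ * |g x| ≤ ε / 2 := by
        rw [inv_mul_le_iff₀ hψ]
        have := hM x
        nlinarith
      have h4 : (ψ x)⁻¹ * |f x| ≤ (ψ x)⁻¹ * |f x - g x| + (ψ x)⁻¹ * |g x| := by
        rw [← mul_add]
        apply mul_le_mul_of_nonneg_left _ (by positivity)
        calc |f x| = |(f x - g x) + g x| := by ring_nf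
          _ ≤ |f x - g x| + |g x| := abs_add_le _ _
      linarith [hgb x]
  · rintro ⟨hcont, hdec⟩ ε hε
    obtain ⟨c, hc, hcle⟩ := exists_pos_lb ψ hpos hcomp
    obtain ⟨R₀, hR₀⟩ := hdec (ε / 4) (by positivity)
    set R₁ := max R₀ 1 with hR₁def
    have hR₁ : (0:ℝ) < R₁ := lt_of_lt_of_le one_pos (le_max_right _ _)
    obtain ⟨M₁, hM₁⟩ := (hcomp R₁ hR₁).exists_bound_of_continuousOn (hcont R₁ hR₁)
    set R' := max R₁ (max (4 * M₁ / ε) c) with hR'def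
    have hR'₁ : R₁ ≤ R' := le_max_left _ _
    have hR' : (0:ℝ) < R' := lt_of_lt_of_le hR₁ hR'₁
    have hMR' : 4 * M₁ / ε ≤ R' := le_trans (le_max_left _ _) (le_max_right _ _)
    have hcR' : c ≤ R' := le_trans (le_max_right _ _) (le_max_right _ _)
    set M := max M₁ (ε / 4 * R') with hMdef
    have hM0 : 0 ≤ M := le_trans (by positivity) (le_max_right _ _)
    have hM₁M : M₁ ≤ ε / 4 * R' := by
      rw [div_le_iff₀ hε] at hMR'
      nlinarith
    have hMle : M ≤ ε / 4 * R' := max_le hM₁M le_rfl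
    have hMK : ∀ x ∈ {x : X | ψ x ≤ R'}, |f x| ≤ M := by
      intro x hx
      rcases le_or_gt (ψ x) R₁ with h1 | h1
      · have hh := hM₁ x h1
        rw [Real.norm_eq_abs] at hh
        exact le_trans hh (le_max_left _ _)
      · have hxR₀ : R₀ < ψ x := lt_of_le_of_lt (le_max_left _ _) h1
        have hb := hR₀ x hxR₀
        have hψ := hpos x
        rw [inv_mul_le_iff₀ hψ] at hb
        calc |f x| ≤ ψ x * (ε / 4) := hb
          _ ≤ R' * (ε / 4) := by nlinarith [hx.out]
          _ ≤ M := by rw [hMdef]; apply le_trans _ (le_max_right _ _); linarith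
    obtain ⟨g, hgc, hgb, hgK⟩ := exists_cb_approx_on_compact (hcomp R' hR')
      (hcont R' hR') hM0 hMK (δ := ε * c / 4) (by positivity)
    refine ⟨g, ⟨hgc, M + ε * c / 4, hgb⟩, fun x => ?_⟩
    have hψ := hpos x
    have hψc := hcle x
    rcases le_or_gt (ψ x) R' with hx | hx
    · have h1 := hgK x hx
      rw [inv_mul_le_iff₀ hψ]
      calc |f x - g x| ≤ ε * c / 4 := h1
        _ ≤ ψ x * ε := by nlinarith
    · have hb := hR₀ x (lt_of_le_of_lt (le_trans (le_max_left _ _) hR'₁) hx)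
      rw [inv_mul_le_iff₀ hψ] at hb
      have h2 : |g x| ≤ M + ε * c / 4 := hgb x
      have h3 : M + ε * c / 4 ≤ ε / 2 * R' := by nlinarith
      have h4 : |f x - g x| ≤ |f x| + |g x| := abs_sub _ _
      rw [inv_mul_le_iff₀ hψ]
      calc |f x - g x| ≤ |f x| + |g x| := h4
        _ ≤ ψ x * (ε / 4) + ε / 2 * R' := by linarith
        _ ≤ ψ x * (ε / 4) + ε / 2 * ψ x := by nlinarith
        _ ≤ ψ x * ε := by nlinarith
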